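/- With P¹_{i,j} = (z₁w₁)^i (z₂w₂)^j (z₁ ∂/∂z₁ + w₁ ∂/∂w₁) and R^k_{m,n} as above on ℂ⁴, the Lie bracket satisfies [P¹_{i,j}, R^k_{m,n}] = 2m R^k_{m+i, n+j} for k = 1, 2. -/
import Mathlib


open MvPolynomial

/-- Polynomials on ℂ⁴ with coordinates (z₁, w₁, z₂, w₂). -/
abbrev Poly4 : Type := MvPolynomial (Fin 4) ℂ

/-- Polynomial vector fields on ℂ⁴, identified with their component polynomials. -/
abbrev VF : Type := Fin 4 → Poly4

/-- Action of a vector field on a polynomial (as a derivation). -/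
noncomputable def vAct (v : VF) (p : Poly4) : Poly4 := ∑ i, v i * pderiv i p

/-- Lie bracket of vector fields, [v,w] = vw − wv as differential operators. -/
noncomputable def vBr (v w : VF) : VF := fun k => vAct v (w k) - vAct w (v k)

/-- The monomial (z₁w₁)^m (z₂w₂)^n, i.e. |z₁|^{2m}|z₂|^{2n}. -/
noncomputable def mon (m n : ℕ) : Poly4 := (X 0 * X 1) ^ m * (X 2 * X 3) ^ n

/-- Planar-radial vector field P¹_{m,n} = (z₁w₁)^m (z₂w₂)^n (z₁ ∂/∂z₁ + w₁ ∂/∂w₁). -/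
noncomputable def P1 (m n : ℕ) : VF := fun k => mon m n * ![X 0, X 1, 0, 0] k

/-- Planar-radial vector field P²_{m,n} = (z₁w₁)^m (z₂w₂)^n (z₂ ∂/∂z₂ + w₂ ∂/∂w₂). -/
noncomputable def P2 (m n : ℕ) : VF := fun k => mon m n * ![0, 0, X 2, X 3] k

/-- Planar-rotating vector field R¹_{m,n} = (z₁w₁)^m (z₂w₂)^n (I z₁ ∂/∂z₁ − I w₁ ∂/∂w₁). -/
noncomputable def R1 (m n : ℕ) : VF :=
  fun k => mon m n * ![C Complex.I * X 0, -(C Complex.I) * X 1, 0, 0] k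

/-- Planar-rotating vector field R²_{m,n} = (z₁w₁)^m (z₂w₂)^n (I z₂ ∂/∂z₂ − I w₂ ∂/∂w₂). -/
noncomputable def R2 (m n : ℕ) : VF :=
  fun k => mon m n * ![0, 0, C Complex.I * X 2, -(C Complex.I) * X 3] k

/-- The family of rotating vector fields, indexed by k ∈ {1,2}. -/
noncomputable def Rk : Fin 2 → ℕ → ℕ → VF := ![R1, R2]

set_option maxHeartbeats 1600000 in
/-- [P¹_{i,j}, R^k_{m,n}] = 2m R^k_{m+i, n+j} for k = 1, 2. -/
theorem bracket_P1_R (k : Fin 2) (i j m n : ℕ) :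
    vBr (P1 i j) (Rk k m n) = ((2:ℂ) * (m:ℂ)) • Rk k (m+i) (n+j) := by
  funext l
  rcases m with _ | m <;>
  fin_cases k <;> fin_cases l <;>
    simp [vBr, vAct, P1, R1, R2, Rk, mon, Fin.sum_univ_four, pderiv_mul,
      pderiv_X_self, pderiv_X_of_ne, Nat.succ_sub_one, smul_eq_mul] <;>
    (try simp only [smul_eq_C_mul, map_add, map_mul, map_natCast, map_ofNat, map_one]) <;> ring
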